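/- Let A be a finite nonempty alphabet, E ⊆ W(A), and 𝐬 = (s_n(x))_{n=0}^∞ an infinite sequence of variable words over A such that E is large in 𝐬. Then there exists n_0 ∈ ℕ such that for every word z ∈ ⟨(s_i(x))_{i=n_0+1}^∞⟩_c there exists a variable word w(x) ∈ ⟨(s_i(x))_{i=0}^{n_0}⟩_v with {w(a)z : a ∈ A} ⊆ E (where w(a)z denotes concatenation). -/

import Mathlib

/- Words over an alphabet are `List α`.  The variable symbol `x` is modelled by
`none : Option α`, and variable words are lists over `Option α` containing `none`. -/

namespace HJ

variable {α : Type*}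

/-- Substitution of the letter `a` for every occurrence of the variable in a
variable word, producing a constant word. -/
def substC (s : List (Option α)) (a : α) : List α :=
  s.map (fun b => b.getD a)

/-- Substitution of `b ∈ A ∪ {x}` (a letter `some a` or the variable `none`)
for every occurrence of the variable. -/
def substV (s : List (Option α)) (b : Option α) : List (Option α) :=
  s.map (fun c => Option.elim c b some)

/-- `s` is a variable word over the alphabet `S`: all its letters lie in `S`
and it contains at least one occurrence of the variable. -/
def IsVarWord (S : Set α) (s : List (Option α)) : Prop :=
  (∀ a : α, some a ∈ s → a ∈ S) ∧ none ∈ s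

/-- `W(S)`: the set of (constant) words over the alphabet `S`. -/
def WordsOver (S : Set α) : Set (List α) :=
  { w | ∀ a ∈ w, a ∈ S }

/-- The constant span of the sequence `s` of variable words, with indices
restricted to `I` and the letter substituted at position `l i` taken from the
alphabet `B (l i)`: all concatenations `s_{l_0}(a_0) ⋯ s_{l_n}(a_n)` with
`l_0 < ⋯ < l_n` in `I` and `a_i ∈ B (l_i)`. -/
def constSpan (B : ℕ → Set α) (s : ℕ → List (Option α)) (I : Set ℕ) :
    Set (List α) :=
  { w | ∃ (n : ℕ) (l : Fin (n + 1) → ℕ) (a : Fin (n + 1) → α),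
      StrictMono l ∧ (∀ i, l i ∈ I) ∧ (∀ i, a i ∈ B (l i)) ∧
      w = (List.ofFn fun i => substC (s (l i)) (a i)).flatten }

/-- The variable span of the sequence `s` of variable words, with indices
restricted to `I` and alphabets given by `B`: all concatenations
`s_{l_0}(b_0) ⋯ s_{l_n}(b_n)` with `l_0 < ⋯ < l_n` in `I` and
`b_i ∈ B (l_i) ∪ {x}` which contain at least one occurrence of the variable. -/
def varSpan (B : ℕ → Set α) (s : ℕ → List (Option α)) (I : Set ℕ) :
    Set (List (Option α)) :=
  { w | ∃ (n : ℕ) (l : Fin (n + 1) → ℕ) (b : Fin (n + 1) → Option α),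
      StrictMono l ∧ (∀ i, l i ∈ I) ∧
      (∀ i, ∀ a : α, b i = some a → a ∈ B (l i)) ∧
      none ∈ w ∧
      w = (List.ofFn fun i => substV (s (l i)) (b i)).flatten }

/-- `(t_0, …, t_l)` is a finite extracted subsequence of `s` (with alphabets `B`):
there are `0 = m_0 < m_1 < ⋯` with `t_i` in the variable span of
`(s_n)_{n = m_i}^{m_{i+1} - 1}` (with alphabets `B`) for all `i ≤ l`. -/
def ExtractedFin (B : ℕ → Set α) (s t : ℕ → List (Option α)) (l : ℕ) : Prop :=
  ∃ m : ℕ → ℕ, m 0 = 0 ∧ StrictMono m ∧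
    ∀ i ≤ l, t i ∈ varSpan B s (Set.Ico (m i) (m (i + 1)))

/-- `t` is an infinite extracted subsequence of `s` (with alphabets `B`). -/
def Extracted (B : ℕ → Set α) (s t : ℕ → List (Option α)) : Prop :=
  ∀ l : ℕ, ExtractedFin B s t l

/-- `E` is large in `s` (with alphabets `B`): `E` meets the constant span of
every infinite extracted subsequence of `s`. -/
def IsLarge (B : ℕ → Set α) (E : Set (List α)) (s : ℕ → List (Option α)) : Prop :=
  ∀ w : ℕ → List (Option α), Extracted B s w →
    (E ∩ constSpan B w Set.univ).Nonempty

/-- `E_F = {z ∈ W(S) : w ++ z ∈ E for every w ∈ F}`. -/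
def wordQuot (S : Set α) (E F : Set (List α)) : Set (List α) :=
  { z | z ∈ WordsOver S ∧ ∀ w ∈ F, w ++ z ∈ E }

end HJ

namespace HJ

variable {α : Type*}

/-! ### auxiliary span without variable requirement -/

def spanAux (B : ℕ → Set α) (s : ℕ → List (Option α)) (I : Set ℕ) :
    Set (List (Option α)) :=
  { w | ∃ (n : ℕ) (l : Fin (n + 1) → ℕ) (b : Fin (n + 1) → Option α),
      StrictMono l ∧ (∀ i, l i ∈ I) ∧
      (∀ i, ∀ a : α, b i = some a → a ∈ B (l i)) ∧
      w = (List.ofFn fun i => substV (s (l i)) (b i)).flatten }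

variable {B : ℕ → Set α} {s : ℕ → List (Option α)} {I J : Set ℕ}

theorem substC_append (u v : List (Option α)) (a : α) :
    substC (u ++ v) a = substC u a ++ substC v a := List.map_append

theorem substC_flatten (L : List (List (Option α))) (a : α) :
    substC L.flatten a = (L.map (substC · a)).flatten := List.map_flatten

theorem substC_substV (u : List (Option α)) (b : Option α) (a : α) :
    substC (substV u b) a = substC u (b.getD a) := by
  simp only [substC, substV, List.map_map]
  refine List.map_congr_left fun c _ => ?_
  cases c <;> cases b <;> rfl

theorem substV_none (u : List (Option α)) : substV u none = u := by
  simp only [substV]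
  refine List.map_congr_left (fun c _ => by cases c <;> rfl) |>.trans (List.map_id u)

theorem substV_some (u : List (Option α)) (a : α) :
    substV u (some a) = (substC u a).map some := by
  simp only [substC, substV, List.map_map]
  refine List.map_congr_left fun c _ => ?_
  cases c <;> rfl

theorem substC_map_some (z : List α) (a : α) : substC (z.map some) a = z := by
  simp only [substC, List.map_map]
  exact List.map_congr_left (fun c _ => rfl) |>.trans (List.map_id z)

theorem spanAux_mono (h : I ⊆ J) : spanAux B s I ⊆ spanAux B s J := by
  rintro w ⟨n, l, b, h1, h2, h3, h4⟩
  exact ⟨n, l, b, h1, fun i => h (h2 i), h3, h4⟩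

theorem constSpan_mono (h : I ⊆ J) : constSpan B s I ⊆ constSpan B s J := by
  rintro w ⟨n, l, b, h1, h2, h3, h4⟩
  exact ⟨n, l, b, h1, fun i => h (h2 i), h3, h4⟩

theorem varSpan_mono (h : I ⊆ J) : varSpan B s I ⊆ varSpan B s J := by
  rintro w ⟨n, l, b, h1, h2, h3, h4, h5⟩
  exact ⟨n, l, b, h1, fun i => h (h2 i), h3, h4, h5⟩

theorem varSpan_subset_spanAux : varSpan B s I ⊆ spanAux B s I := by
  rintro w ⟨n, l, b, h1, h2, h3, _, h5⟩
  exact ⟨n, l, b, h1, h2, h3, h5⟩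

theorem mem_varSpan_of_spanAux (hw : w ∈ spanAux B s I) (hn : none ∈ w) :
    w ∈ varSpan B s I := by
  obtain ⟨n, l, b, h1, h2, h3, h4⟩ := hw
  exact ⟨n, l, b, h1, h2, h3, hn, h4⟩

/-- prepend a single piece to a span element -/
theorem spanAux_cons {v : List (Option α)} (i₀ : ℕ) (b₀ : Option α)
    (hb₀ : ∀ a : α, b₀ = some a → a ∈ B i₀) (hi₀ : i₀ ∈ I)
    (hv : v ∈ spanAux B s J) (hlt : ∀ j ∈ J, i₀ < j) :
    substV (s i₀) b₀ ++ v ∈ spanAux B s (I ∪ J) := by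
  obtain ⟨m, l', b', hl', hlJ, hb', rfl⟩ := hv
  refine ⟨m + 1, Fin.cases i₀ l', Fin.cases b₀ b', ?_, ?_, ?_, ?_⟩
  · intro i j hij
    induction j using Fin.cases with
    | zero =>
      rw [Fin.lt_def] at hij
      exact absurd hij (by simp)
    | succ j =>
      induction i using Fin.cases with
      | zero => simpa using hlt _ (hlJ j)
      | succ i =>
        simp only [Fin.cases_succ]
        exact hl' (Fin.succ_lt_succ_iff.mp hij)
  · intro i
    induction i using Fin.cases with
    | zero => simpa using Or.inl hi₀
    | succ i => simpa using Or.inr (hlJ i)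
  · intro i
    induction i using Fin.cases with
    | zero => simpa using hb₀
    | succ i => simpa using hb' i
  · simp only [List.ofFn_succ, Fin.cases_zero, Fin.cases_succ, List.flatten_cons]

theorem spanAux_append_aux {J : Set ℕ} :
    ∀ (n : ℕ) (I : Set ℕ) (l : Fin (n+1) → ℕ) (b : Fin (n+1) → Option α)
      (v : List (Option α)), StrictMono l → (∀ i, l i ∈ I) →
      (∀ i (a : α), b i = some a → a ∈ B (l i)) → v ∈ spanAux B s J →
      (∀ i ∈ I, ∀ j ∈ J, i < j) →
      (List.ofFn fun i => substV (s (l i)) (b i)).flatten ++ v ∈ spanAux B s (I ∪ J) := by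
  intro n
  induction n with
  | zero =>
    intro I l b v hl hlI hb hv hIJ
    have h0 : (List.ofFn fun i : Fin 1 => substV (s (l i)) (b i)).flatten
        = substV (s (l 0)) (b 0) := by simp
    rw [h0]
    exact spanAux_cons (l 0) (b 0) (hb 0) (hlI 0) hv (fun j hj => hIJ _ (hlI 0) _ hj)
  | succ n ih =>
    intro I l b v hl hlI hb hv hIJ
    rw [List.ofFn_succ, List.flatten_cons, List.append_assoc]
    have hrest : (List.ofFn fun i : Fin (n+1) =>
        substV (s (l i.succ)) (b i.succ)).flatten ++ v ∈
        spanAux B s ({x ∈ I | l 0 < x} ∪ J) := by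
      refine ih {x ∈ I | l 0 < x} (fun i => l i.succ) (fun i => b i.succ) v
        (fun i j hij => hl (by rw [Fin.lt_def] at hij ⊢; simpa using hij))
        (fun i => ⟨hlI _, hl (by rw [Fin.lt_def]; simp)⟩)
        (fun i a ha => hb _ a ha) hv
        (fun i hi j hj => hIJ _ hi.1 _ hj)
    have hmain := spanAux_cons (B := B) (s := s) (I := I) (l 0) (b 0) (hb 0) (hlI 0) hrest
      (fun j hj => by
        rcases hj with hj | hj
        · exact hj.2
        · exact hIJ _ (hlI 0) _ hj)
    refine spanAux_mono ?_ hmain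
    rintro x (hx | hx | hx)
    · exact Or.inl hx
    · exact Or.inl hx.1
    · exact Or.inr hx

/-- appending two span elements with separated index sets -/
theorem spanAux_append {u v : List (Option α)}
    (hu : u ∈ spanAux B s I) (hv : v ∈ spanAux B s J)
    (hIJ : ∀ i ∈ I, ∀ j ∈ J, i < j) :
    u ++ v ∈ spanAux B s (I ∪ J) := by
  obtain ⟨n, l, b, hl, hlI, hb, rfl⟩ := hu
  exact spanAux_append_aux n I l b v hl hlI hb hv hIJ


theorem map_some_mem_spanAux {w : List α} (hw : w ∈ constSpan B s I) :
    w.map some ∈ spanAux B s I := by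
  obtain ⟨n, l, a, h1, h2, h3, rfl⟩ := hw
  refine ⟨n, l, fun i => some (a i), h1, h2, fun i a' ha' => by
    obtain rfl : a i = a' := Option.some_injective _ ha'
    exact h3 i, ?_⟩
  rw [List.map_flatten, List.map_ofFn]
  exact congrArg _ (congrArg _ (funext fun i => (substV_some _ _).symm))

theorem constSpan_of_map_some (hs : ∀ n, IsVarWord (Set.univ : Set α) (s n) ∨ none ∈ s n)
    {w : List α} (hw : w.map some ∈ spanAux B s I) : w ∈ constSpan B s I := by
  obtain ⟨n, l, b, h1, h2, h3, heq⟩ := hw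
  have hb : ∀ i, ∃ a : α, b i = some a := by
    intro i
    cases hbi : b i with
    | some a => exact ⟨a, rfl⟩
    | none =>
      exfalso
      have hnone : (none : Option α) ∈ w.map some := by
        rw [heq, List.mem_flatten]
        refine ⟨substV (s (l i)) (b i), ?_, ?_⟩
        · rw [List.mem_ofFn]; exact ⟨i, rfl⟩
        · rw [hbi, substV_none]
          rcases hs (l i) with h | h
          · exact h.2
          · exact h
      simp at hnone
  choose a ha using hb
  refine ⟨n, l, a, h1, h2, fun i => h3 i (a i) (ha i), ?_⟩
  have : w.map some = ((List.ofFn fun i => substC (s (l i)) (a i)).flatten).map some := by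
    rw [heq, List.map_flatten, List.map_ofFn]
    exact congrArg _ (congrArg _ (funext fun i => by
      simp only [Function.comp_apply, ha i, substV_some]))
  exact List.map_injective_iff.mpr (Option.some_injective α) this

theorem substC_mem_constSpan {A : Finset α} {w : List (Option α)} {a : α}
    (hw : w ∈ spanAux (fun _ => (A : Set α)) s I) (ha : a ∈ A) :
    substC w a ∈ constSpan (fun _ => (A : Set α)) s I := by
  obtain ⟨n, l, b, h1, h2, h3, rfl⟩ := hw
  refine ⟨n, l, fun i => (b i).getD a, h1, h2, fun i => ?_, ?_⟩
  · cases hbi : b i with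
    | none => simpa [hbi] using ha
    | some a' => simpa [hbi] using h3 i a' hbi
  · rw [substC_flatten, List.map_ofFn]
    exact congrArg _ (congrArg _ (funext fun i => substC_substV _ _ _))

/-- flatten of ordered block pieces -/
theorem flatten_mem_spanAux :
    ∀ (k : ℕ) (u : Fin (k+1) → List (Option α)) (c d : Fin (k+1) → ℕ),
      (∀ i, u i ∈ spanAux B s (Set.Ico (c i) (d i))) →
      (∀ i j, i < j → d i ≤ c j) →
      (List.ofFn u).flatten ∈ spanAux B s (Set.Ico (c 0) (d (Fin.last k))) := by
  intro k
  induction k with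
  | zero =>
    intro u c d hu _
    have : (List.ofFn u).flatten = u 0 := by simp
    rw [this]
    exact hu 0
  | succ k ih =>
    intro u c d hu hcd
    rw [List.ofFn_succ, List.flatten_cons]
    have htail : (List.ofFn fun i : Fin (k+1) => u i.succ).flatten ∈
        spanAux B s (Set.Ico (c (Fin.succ 0)) (d (Fin.last (k+1)))) := by
      have := ih (fun i => u i.succ) (fun i => c i.succ) (fun i => d i.succ)
        (fun i => hu i.succ) (fun i j hij => hcd _ _ (Fin.succ_lt_succ_iff.mpr hij))
      simpa [Fin.succ_last] using this
    have hne : c (Fin.succ 0) < d (Fin.last (k+1)) := by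
      obtain ⟨m, l, b, _, hI, _, _⟩ := htail
      exact lt_of_le_of_lt (hI 0).1 (hI 0).2
    have hne0 : c 0 < d 0 := by
      obtain ⟨m, l, b, _, hI, _, _⟩ := hu 0
      exact lt_of_le_of_lt (hI 0).1 (hI 0).2
    have hd0 : d 0 ≤ c (Fin.succ 0) := hcd 0 (Fin.succ 0) (Fin.succ_pos _)
    have happ := spanAux_append (hu 0) htail
      (fun i hi j hj => lt_of_lt_of_le hi.2 (le_trans hd0 hj.1))
    refine spanAux_mono ?_ happ
    rintro x (hx | hx)
    · exact ⟨hx.1, lt_of_lt_of_le hx.2 (le_trans hd0 (le_of_lt hne))⟩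
    · exact ⟨le_trans (le_of_lt hne0) (le_trans hd0 hx.1), hx.2⟩


theorem constSpan_congr {t t' : ℕ → List (Option α)}
    (h : ∀ i ∈ I, t i = t' i) : constSpan B t I = constSpan B t' I := by
  have key : ∀ (t t' : ℕ → List (Option α)), (∀ i ∈ I, t i = t' i) →
      constSpan B t I ⊆ constSpan B t' I := by
    rintro t t' h w ⟨n, l, a, h1, h2, h3, rfl⟩
    exact ⟨n, l, a, h1, h2, h3, congrArg _ (congrArg _ (funext fun i =>
      congrArg (substC · (a i)) (h _ (h2 i))))⟩
  exact le_antisymm (key t t' h) (key t' t fun i hi => (h i hi).symm)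

theorem constSpan_Iio_finite {A : Finset α} (t : ℕ → List (Option α)) (j : ℕ) :
    (constSpan (fun _ => (A : Set α)) t (Set.Iio j)).Finite := by
  classical
  have : constSpan (fun _ => (A : Set α)) t (Set.Iio j) ⊆
      Set.range (fun p : Σ k : Fin j, (Fin (k + 1) → Fin j) × (Fin (k + 1) → ↥A) =>
        (List.ofFn fun i => substC (t (p.2.1 i : ℕ)) ((p.2.2 i : α))).flatten) := by
    rintro w ⟨n, l, a, h1, h2, h3, rfl⟩
    have hle : ∀ i : Fin (n + 1), (i : ℕ) ≤ l i := by
      intro i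
      induction i using Fin.induction with
      | zero => exact Nat.zero_le _
      | succ i ihi =>
        have h1' := h1 (Fin.castSucc_lt_succ : i.castSucc < i.succ)
        have h2' : ((i.castSucc : Fin (n+1)) : ℕ) = (i : ℕ) := Fin.coe_castSucc i
        simp only [Fin.val_succ]
        omega
    have hn : n < j := lt_of_le_of_lt (by simpa using hle (Fin.last n)) (h2 (Fin.last n))
    refine ⟨⟨⟨n, hn⟩, fun i => ⟨l i, h2 i⟩, fun i => ⟨a i, h3 i⟩⟩, rfl⟩
  exact Set.Finite.subset (Set.finite_range _) this

/-- Hales-Jewett theorem over `Fin n`. -/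
theorem hj_fin (γ : Type*) (κ : Type*) [Finite γ] [Finite κ] :
    ∃ n : ℕ, ∀ C : (Fin n → γ) → κ, ∃ l : Combinatorics.Line γ (Fin n), l.IsMono C := by
  obtain ⟨ι, hι, hmono⟩ := Combinatorics.Line.exists_mono_in_high_dimension γ κ
  have : Fintype ι := hι
  refine ⟨Fintype.card ι, fun C => ?_⟩
  set e := Fintype.equivFin ι
  obtain ⟨l, c, hc⟩ := hmono (fun v => C (v ∘ e.symm))
  obtain ⟨i₀, hi₀⟩ := l.proper
  refine ⟨⟨fun i => l.idxFun (e.symm i), ⟨e i₀, by simpa using hi₀⟩⟩, c, fun x => ?_⟩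
  exact hc x

theorem constSpan_bounded {w : List α} {N : ℕ}
    (hw : w ∈ constSpan B s (Set.Ioi N)) :
    ∃ M, N < M ∧ w ∈ constSpan B s (Set.Ioo N M) := by
  obtain ⟨n, l, a, h1, h2, h3, rfl⟩ := hw
  refine ⟨l (Fin.last n) + 1, lt_of_lt_of_le (h2 (Fin.last n)) (Nat.le_succ _), n, l, a, h1,
    fun i => ⟨h2 i, Nat.lt_succ_of_le (h1.monotone (Fin.le_last i))⟩, h3, rfl⟩

/-- constant span of extracted blocks sits inside the constant span of `s`. -/
theorem constSpan_comp {A : Finset α} (hs : ∀ n, IsVarWord (A : Set α) (s n))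
    (t : ℕ → List (Option α)) (M : ℕ → ℕ) (hM : Monotone M) (j Mj : ℕ) (hMj : M j ≤ Mj)
    (ht : ∀ i < j, t i ∈ varSpan (fun _ => (A : Set α)) s (Set.Ico (M i) (M (i+1)))) :
    ∀ p ∈ constSpan (fun _ => (A : Set α)) t (Set.Iio j),
      p ∈ constSpan (fun _ => (A : Set α)) s (Set.Iio Mj) := by
  rintro p ⟨n, l, a, h1, h2, h3, rfl⟩
  have key : (List.map some ((List.ofFn fun i =>
      substC (t (l i)) (a i)).flatten)) ∈
      spanAux (fun _ => (A : Set α)) s (Set.Ico (M (l 0)) (M (l (Fin.last n) + 1))) := by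
    rw [List.map_flatten, List.map_ofFn]
    have := flatten_mem_spanAux (B := fun _ => (A : Set α)) (s := s) n
      (fun i => List.map some (substC (t (l i)) (a i)))
      (fun i => M (l i)) (fun i => M (l i + 1))
      (fun i => map_some_mem_spanAux
        (substC_mem_constSpan (varSpan_subset_spanAux (ht (l i) (h2 i))) (h3 i)))
      (fun i i' hii' => hM (Nat.succ_le_of_lt (h1 hii')))
    simpa [Function.comp] using this
  have hsub : Set.Ico (M (l 0)) (M (l (Fin.last n) + 1)) ⊆ Set.Iio Mj := by
    intro x hx
    exact lt_of_lt_of_le hx.2 (le_trans (hM (Nat.succ_le_of_lt (h2 (Fin.last n)))) hMj)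
  refine constSpan_of_map_some (fun n => Or.inr (hs n).2) (spanAux_mono hsub key)


theorem step_exists {A : Finset α} {E : Set (List α)}
    (hs : ∀ n, IsVarWord (A : Set α) (s n))
    (hfail : ∀ n₀ : ℕ, ∃ z ∈ constSpan (fun _ => (A : Set α)) s (Set.Ioi n₀),
      ∀ w ∈ varSpan (fun _ => (A : Set α)) s (Set.Iic n₀),
        ∃ a ∈ A, substC w a ++ z ∉ E)
    (tprev : ℕ → List (Option α)) (j Mj : ℕ) :
    ∃ (tj : List (Option α)) (Mnext : ℕ), Mj < Mnext ∧
      tj ∈ varSpan (fun _ => (A : Set α)) s (Set.Ico Mj Mnext) ∧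
      ((∀ p ∈ constSpan (fun _ => (A : Set α)) tprev (Set.Iio j),
          p ∈ constSpan (fun _ => (A : Set α)) s (Set.Iio Mj)) →
        ∀ p, (p = [] ∨ p ∈ constSpan (fun _ => (A : Set α)) tprev (Set.Iio j)) →
          ∀ a ∈ A, p ++ substC tj a ∉ E) := by
  classical
  have hPfin := constSpan_Iio_finite (A := A) tprev j
  obtain ⟨n, hn⟩ := hj_fin (↥A) (Option ↥hPfin.toFinset → Bool)
  obtain ⟨z, hz, hbad⟩ := hfail (Mj + n)
  set pre : Option ↥hPfin.toFinset → List α :=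
    fun op => (op.map Subtype.val).getD [] with hpre
  obtain ⟨line, c, hc⟩ := hn (fun ε op =>
    decide (pre op ++ (List.ofFn fun i => substC (s (Mj + (i : ℕ))) ((ε i : α))).flatten
      ++ z ∈ E))
  obtain ⟨i₀, hi₀⟩ := line.proper
  have hn0 : n ≠ 0 := fun h => (h ▸ i₀).elim0
  obtain ⟨k, rfl⟩ : ∃ k, n = k + 1 := ⟨n - 1, by omega⟩
  set wj : List (Option α) := (List.ofFn fun i : Fin (k+1) =>
    substV (s (Mj + (i : ℕ))) ((line.idxFun i).map Subtype.val)).flatten with hwj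
  have hwjmem : wj ∈ spanAux (fun _ => (A : Set α)) s (Set.Ico Mj (Mj + (k+1))) := by
    refine ⟨k, fun i => Mj + (i : ℕ), fun i => (line.idxFun i).map Subtype.val,
      fun i i' hii' => Nat.add_lt_add_left (Fin.lt_def.mp hii') Mj,
      fun i => ⟨Nat.le_add_right _ _, Nat.add_lt_add_left i.isLt Mj⟩,
      fun i a ha => ?_, rfl⟩
    have ha' : (line.idxFun i).map Subtype.val = some a := ha
    cases h : line.idxFun i with
    | none => rw [h] at ha'; simp at ha'
    | some x =>
      rw [h] at ha'
      simp only [Option.map_some] at ha'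
      exact (Option.some_injective _ ha') ▸ x.2
  have hnwj : none ∈ wj := by
    rw [hwj, List.mem_flatten]
    refine ⟨s (Mj + (i₀ : ℕ)), ?_, (hs _).2⟩
    rw [List.mem_ofFn]
    refine ⟨i₀, ?_⟩
    show substV (s (Mj + (i₀ : ℕ))) ((line.idxFun i₀).map Subtype.val) = s (Mj + (i₀ : ℕ))
    rw [hi₀, Option.map_none]
    exact substV_none _
  obtain ⟨M', hM'1, hz2⟩ := constSpan_bounded hz
  refine ⟨wj ++ z.map some, M', by omega, ?_, ?_⟩
  · have h1 := map_some_mem_spanAux hz2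
    have h2 := spanAux_append hwjmem h1
      (fun i hi j' hj' => lt_of_lt_of_le hi.2 (le_of_lt hj'.1))
    refine mem_varSpan_of_spanAux (spanAux_mono ?_ h2)
      (List.mem_append.2 (Or.inl hnwj))
    rintro x (hx | hx)
    · exact ⟨hx.1, lt_trans hx.2 hM'1⟩
    · exact ⟨le_of_lt (lt_of_le_of_lt (Nat.le_add_right Mj (k+1)) hx.1), hx.2⟩
  · intro htprev p hp a ha
    have main : ∀ op : Option ↥hPfin.toFinset,
        (pre op).map some ++ wj ∈ varSpan (fun _ => (A : Set α)) s (Set.Iic (Mj + (k+1))) →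
        pre op ++ substC (wj ++ z.map some) a ∉ E := by
      intro op hvp
      obtain ⟨a', ha', hout⟩ := hbad _ hvp
      have key : ∀ (b : α) (hb : b ∈ A), substC wj b
          = (List.ofFn fun i => substC (s (Mj + (i : ℕ))) ((line ⟨b, hb⟩ i : α))).flatten := by
        intro b hb
        rw [hwj, substC_flatten, List.map_ofFn]
        refine congrArg _ (congrArg _ (funext fun i => ?_))
        simp only [Function.comp_apply, substC_substV]
        congr 1
        cases h : line.idxFun i <;>
          simp [Combinatorics.Line.coe_apply, h]
      have e1 : decide (pre op ++ (List.ofFn fun i =>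
          substC (s (Mj + (i : ℕ))) ((line ⟨a', ha'⟩ i : α))).flatten ++ z ∈ E) = c op :=
        congrFun (hc ⟨a', ha'⟩) op
      have e2 : decide (pre op ++ (List.ofFn fun i =>
          substC (s (Mj + (i : ℕ))) ((line ⟨a, ha⟩ i : α))).flatten ++ z ∈ E) = c op :=
        congrFun (hc ⟨a, ha⟩) op
      rw [substC_append, substC_map_some] at hout
      have hfalse : c op = false := by
        rw [← e1]
        refine decide_eq_false ?_
        rw [← key a' ha']
        exact hout
      have hnot : pre op ++ substC wj a ++ z ∉ E := by
        have e2' : decide (pre op ++ substC wj a ++ z ∈ E) = false := by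
          rw [key a ha]; exact e2.trans hfalse
        exact of_decide_eq_false e2'
      intro hmem
      apply hnot
      rw [substC_append, substC_map_some, ← List.append_assoc] at hmem
      exact hmem
    rcases hp with rfl | hp
    · have hvp : (pre none).map some ++ wj ∈
          varSpan (fun _ => (A : Set α)) s (Set.Iic (Mj + (k+1))) := by
        have : (pre none).map some ++ wj = wj := rfl
        rw [this]
        refine mem_varSpan_of_spanAux (spanAux_mono ?_ hwjmem) hnwj
        intro x hx
        exact le_of_lt hx.2
      exact main none hvp
    · have hpmem := hPfin.mem_toFinset.2 hp
      have hvp : (pre (some ⟨p, hpmem⟩)).map some ++ wj ∈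
          varSpan (fun _ => (A : Set α)) s (Set.Iic (Mj + (k+1))) := by
        have h3 := map_some_mem_spanAux (htprev p hp)
        have h4 := spanAux_append h3 hwjmem
          (fun i hi j' hj' => lt_of_lt_of_le hi hj'.1)
        refine mem_varSpan_of_spanAux (spanAux_mono ?_ h4)
          (List.mem_append.2 (Or.inr hnwj))
        rintro x (hx | hx)
        · exact le_of_lt (lt_of_lt_of_le hx (Nat.le_add_right Mj (k+1)))
        · exact le_of_lt hx.2
      exact main (some ⟨p, hpmem⟩) hvp


section Build

variable {A : Finset α} {E : Set (List α)} {s : ℕ → List (Option α)}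

variable (A E s) in
/-- failure hypothesis -/
def Fails : Prop :=
  ∀ n₀ : ℕ, ∃ z ∈ constSpan (fun _ => (A : Set α)) s (Set.Ioi n₀),
    ∀ w ∈ varSpan (fun _ => (A : Set α)) s (Set.Iic n₀),
      ∃ a ∈ A, substC w a ++ z ∉ E

variable (hs : ∀ n, IsVarWord (A : Set α) (s n)) (hfail : Fails A E s)

noncomputable def stepT (tprev : ℕ → List (Option α)) (j Mj : ℕ) : List (Option α) :=
  (step_exists hs hfail tprev j Mj).choose

noncomputable def stepM (tprev : ℕ → List (Option α)) (j Mj : ℕ) : ℕ :=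
  (step_exists hs hfail tprev j Mj).choose_spec.choose

theorem step_spec (tprev : ℕ → List (Option α)) (j Mj : ℕ) :
    Mj < stepM hs hfail tprev j Mj ∧
    stepT hs hfail tprev j Mj ∈
      varSpan (fun _ => (A : Set α)) s (Set.Ico Mj (stepM hs hfail tprev j Mj)) ∧
    ((∀ p ∈ constSpan (fun _ => (A : Set α)) tprev (Set.Iio j),
        p ∈ constSpan (fun _ => (A : Set α)) s (Set.Iio Mj)) →
      ∀ p, (p = [] ∨ p ∈ constSpan (fun _ => (A : Set α)) tprev (Set.Iio j)) →
        ∀ a ∈ A, p ++ substC (stepT hs hfail tprev j Mj) a ∉ E) :=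
  (step_exists hs hfail tprev j Mj).choose_spec.choose_spec

noncomputable def state : ℕ → (ℕ → List (Option α)) × ℕ
  | 0 => (fun _ => [], 0)
  | j + 1 =>
    let pr := state j
    (Function.update pr.1 j (stepT hs hfail pr.1 j pr.2), stepM hs hfail pr.1 j pr.2)

noncomputable def tseq (j : ℕ) : List (Option α) := (state hs hfail (j + 1)).1 j

noncomputable def Mseq (j : ℕ) : ℕ := (state hs hfail j).2

theorem tseq_eq (j : ℕ) :
    tseq hs hfail j = stepT hs hfail (state hs hfail j).1 j (state hs hfail j).2 := by
  show (state hs hfail (j + 1)).1 j = _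
  rw [state]
  exact Function.update_self _ _ _

theorem Mseq_succ (j : ℕ) :
    Mseq hs hfail (j + 1) = stepM hs hfail (state hs hfail j).1 j (state hs hfail j).2 := by
  show (state hs hfail (j + 1)).2 = _
  rw [state]

theorem Mseq_zero : Mseq hs hfail 0 = 0 := by
  show (state hs hfail 0).2 = 0
  rw [state]

theorem Mseq_strictMono : StrictMono (Mseq hs hfail) := by
  refine strictMono_nat_of_lt_succ fun j => ?_
  rw [Mseq_succ]
  exact (step_spec hs hfail (state hs hfail j).1 j (state hs hfail j).2).1

theorem state_fst_eq (j : ℕ) : ∀ k, j < k → (state hs hfail k).1 j = tseq hs hfail j := by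
  intro k
  induction k with
  | zero => omega
  | succ k ih =>
    intro h
    rcases Nat.lt_succ_iff_lt_or_eq.mp h with h' | rfl
    · have hne : j ≠ k := by omega
      show (state hs hfail (k+1)).1 j = _
      rw [state]
      show Function.update (state hs hfail k).1 k _ j = _
      rw [Function.update_of_ne hne]
      exact ih h'
    · rfl

theorem constSpan_state_eq (j : ℕ) :
    constSpan (fun _ => (A : Set α)) (state hs hfail j).1 (Set.Iio j) =
    constSpan (fun _ => (A : Set α)) (tseq hs hfail) (Set.Iio j) :=
  constSpan_congr (fun i hi => state_fst_eq hs hfail i j hi)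

theorem main_inv (j : ℕ) :
    tseq hs hfail j ∈ varSpan (fun _ => (A : Set α)) s
      (Set.Ico (Mseq hs hfail j) (Mseq hs hfail (j+1))) ∧
    ∀ p, (p = [] ∨ p ∈ constSpan (fun _ => (A : Set α)) (tseq hs hfail) (Set.Iio j)) →
      ∀ a ∈ A, p ++ substC (tseq hs hfail j) a ∉ E := by
  induction j using Nat.strong_induction_on with
  | _ j ih =>
    obtain ⟨h1, h2, h3⟩ := step_spec hs hfail (state hs hfail j).1 j (state hs hfail j).2
    have hMj : Mseq hs hfail j = (state hs hfail j).2 := rfl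
    constructor
    · rw [tseq_eq, hMj, Mseq_succ]
      exact h2
    · intro p hp a ha
      rw [tseq_eq]
      refine h3 ?_ p ?_ a ha
      · intro q hq
        rw [constSpan_state_eq] at hq
        rw [← hMj]
        exact constSpan_comp hs (tseq hs hfail) (Mseq hs hfail)
          (Mseq_strictMono hs hfail).monotone j (Mseq hs hfail j) le_rfl
          (fun i hi => (ih i hi).1) q hq
      · rw [constSpan_state_eq]
        exact hp

end Build

end HJ

open HJ in
/-- Claim 1 of Lemma 2.10: a uniform head for all tails. -/
theorem stmt6 {α : Type*} (A : Finset α) (hA : A.Nonempty)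
    (E : Set (List α)) (hE : E ⊆ WordsOver (A : Set α))
    (s : ℕ → List (Option α)) (hs : ∀ n, IsVarWord (A : Set α) (s n))
    (hlarge : IsLarge (fun _ => (A : Set α)) E s) :
    ∃ n₀ : ℕ, ∀ z ∈ constSpan (fun _ => (A : Set α)) s (Set.Ioi n₀),
      ∃ w ∈ varSpan (fun _ => (A : Set α)) s (Set.Iic n₀),
        ∀ a ∈ A, substC w a ++ z ∈ E := by
  by_contra hcon
  push_neg at hcon
  have hfail : Fails A E s := fun n₀ => hcon n₀
  have hExt : Extracted (fun _ => (A : Set α)) s (tseq hs hfail) := fun l =>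
    ⟨Mseq hs hfail, Mseq_zero hs hfail, Mseq_strictMono hs hfail,
      fun i _ => (main_inv hs hfail i).1⟩
  obtain ⟨y, hyE, hySpan⟩ := hlarge (tseq hs hfail) hExt
  obtain ⟨k, l, a, hmono, -, haA, rfl⟩ := hySpan
  rw [List.ofFn_succ', List.concat_eq_append, List.flatten_append, List.flatten_cons, List.flatten_nil, List.append_nil] at hyE
  have hp : (List.ofFn fun i : Fin k =>
        substC (tseq hs hfail (l i.castSucc)) (a i.castSucc)).flatten = [] ∨
      (List.ofFn fun i : Fin k =>
        substC (tseq hs hfail (l i.castSucc)) (a i.castSucc)).flatten ∈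
      constSpan (fun _ => (A : Set α)) (tseq hs hfail) (Set.Iio (l (Fin.last k))) := by
    rcases Nat.eq_zero_or_pos k with rfl | hk
    · left; simp
    · obtain ⟨k', rfl⟩ := Nat.exists_eq_succ_of_ne_zero (Nat.pos_iff_ne_zero.mp hk)
      right
      exact ⟨k', fun i => l i.castSucc, fun i => a i.castSucc,
        fun i i' h => hmono (Fin.castSucc_lt_castSucc_iff.mpr h),
        fun i => hmono (Fin.castSucc_lt_last i),
        fun i => haA _, rfl⟩
  exact (main_inv hs hfail (l (Fin.last k))).2 _ hp (a (Fin.last k)) (haA _) hyE
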